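/- For positive reals λ₁, λ₂, the equation β = (1-e^{-λ₁β})(1-e^{-λ₂β}) has at most two solutions with β > 0. -/

import Mathlib

open Real Set

private lemma exp_deriv_aux (c t : ℝ) :
    HasDerivAt (fun s : ℝ => Real.exp (-c * s)) (-c * Real.exp (-c * t)) t := by
  have h1 : HasDerivAt (fun s : ℝ => -c * s) (-c) t := by
    simpa using (hasDerivAt_id t).const_mul (-c)
  simpa [mul_comm] using h1.exp

set_option maxHeartbeats 1000000 in
private lemma key_aux (a b : ℝ) (ha : 0 < a) (hb : 0 < b) {x y z : ℝ}
    (hx0 : 0 < x) (hxy : x < y) (hyz : y < z)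
    (Hx : x = (1 - Real.exp (-a * x)) * (1 - Real.exp (-b * x)))
    (Hy : y = (1 - Real.exp (-a * y)) * (1 - Real.exp (-b * y)))
    (Hz : z = (1 - Real.exp (-a * z)) * (1 - Real.exp (-b * z))) : False := by
  set h : ℝ → ℝ := fun t => (1 - Real.exp (-a * t)) * (1 - Real.exp (-b * t)) - t with hh
  set f1 : ℝ → ℝ := fun t =>
    a * Real.exp (-a * t) * (1 - Real.exp (-b * t))
      + (1 - Real.exp (-a * t)) * (b * Real.exp (-b * t)) - 1 with hf1
  set f2 : ℝ → ℝ := fun t =>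
    (a + b) ^ 2 * Real.exp (-(a + b) * t) - a ^ 2 * Real.exp (-a * t)
      - b ^ 2 * Real.exp (-b * t) with hf2
  have Dh : ∀ t, HasDerivAt h (f1 t) t := by
    intro t
    have e1 := exp_deriv_aux a t
    have e2 := exp_deriv_aux b t
    have p1 : HasDerivAt (fun s => 1 - Real.exp (-a * s)) (a * Real.exp (-a * t)) t := by
      simpa using e1.const_sub 1
    have p2 : HasDerivAt (fun s => 1 - Real.exp (-b * s)) (b * Real.exp (-b * t)) t := by
      simpa using e2.const_sub 1
    have := (p1.mul p2).sub (hasDerivAt_id t)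
    exact this
  have Df1 : ∀ t, HasDerivAt f1 (f2 t) t := by
    intro t
    have e1 := exp_deriv_aux a t
    have e2 := exp_deriv_aux b t
    have p1 : HasDerivAt (fun s => 1 - Real.exp (-a * s)) (a * Real.exp (-a * t)) t := by
      simpa using e1.const_sub 1
    have p2 : HasDerivAt (fun s => 1 - Real.exp (-b * s)) (b * Real.exp (-b * t)) t := by
      simpa using e2.const_sub 1
    have q1 : HasDerivAt (fun s => a * Real.exp (-a * s)) (a * (-a * Real.exp (-a * t))) t :=
      e1.const_mul a
    have q2 : HasDerivAt (fun s => b * Real.exp (-b * s)) (b * (-b * Real.exp (-b * t))) t :=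
      e2.const_mul b
    have := ((q1.mul p2).add (p1.mul q2)).sub_const 1
    have hE : Real.exp (-(a + b) * t) = Real.exp (-a * t) * Real.exp (-b * t) := by
      rw [← Real.exp_add]; ring_nf
    refine this.congr_deriv ?_
    simp only [hf2, hE]; ring
  have hcont : Continuous h := by
    rw [continuous_iff_continuousAt]; exact fun t => (Dh t).continuousAt
  have hcont1 : Continuous f1 := by
    rw [continuous_iff_continuousAt]; exact fun t => (Df1 t).continuousAt
  have h0 : h 0 = 0 := by simp [hh]
  have hxr : h x = 0 := by simp only [hh]; linarith
  have hyr : h y = 0 := by simp only [hh]; linarith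
  have hzr : h z = 0 := by simp only [hh]; linarith
  obtain ⟨c0, hc0, hc0z⟩ := exists_hasDerivAt_eq_zero hx0 hcont.continuousOn
    (by rw [h0, hxr]) (fun u _ => Dh u)
  obtain ⟨c1, hc1, hc1z⟩ := exists_hasDerivAt_eq_zero hxy hcont.continuousOn
    (by rw [hxr, hyr]) (fun u _ => Dh u)
  obtain ⟨c2, hc2, hc2z⟩ := exists_hasDerivAt_eq_zero hyz hcont.continuousOn
    (by rw [hyr, hzr]) (fun u _ => Dh u)
  have hc01 : c0 < c1 := lt_trans hc0.2 hc1.1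
  have hc12 : c1 < c2 := lt_trans hc1.2 hc2.1
  obtain ⟨d0, hd0, hd0z⟩ := exists_hasDerivAt_eq_zero hc01 hcont1.continuousOn
    (by rw [hc0z, hc1z]) (fun u _ => Df1 u)
  obtain ⟨d1, hd1, hd1z⟩ := exists_hasDerivAt_eq_zero hc12 hcont1.continuousOn
    (by rw [hc1z, hc2z]) (fun u _ => Df1 u)
  have hd01 : d0 < d1 := lt_trans hd0.2 hd1.1
  -- f2 d = exp(-(a+b)d) * ψ d
  have hpsi : ∀ d : ℝ, f2 d = Real.exp (-(a + b) * d) *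
      ((a + b) ^ 2 - a ^ 2 * Real.exp (b * d) - b ^ 2 * Real.exp (a * d)) := by
    intro d
    have h1 : Real.exp (-(a + b) * d) * Real.exp (b * d) = Real.exp (-a * d) := by
      rw [← Real.exp_add]; ring_nf
    have h2 : Real.exp (-(a + b) * d) * Real.exp (a * d) = Real.exp (-b * d) := by
      rw [← Real.exp_add]; ring_nf
    simp only [hf2]
    linear_combination a ^ 2 * h1 + b ^ 2 * h2
  have hz0 : (a + b) ^ 2 - a ^ 2 * Real.exp (b * d0) - b ^ 2 * Real.exp (a * d0) = 0 := by
    have := hd0z; rw [hpsi] at this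
    rcases mul_eq_zero.1 this with h' | h'
    · exact absurd h' (Real.exp_ne_zero _)
    · exact h'
  have hz1 : (a + b) ^ 2 - a ^ 2 * Real.exp (b * d1) - b ^ 2 * Real.exp (a * d1) = 0 := by
    have := hd1z; rw [hpsi] at this
    rcases mul_eq_zero.1 this with h' | h'
    · exact absurd h' (Real.exp_ne_zero _)
    · exact h'
  have e1 : Real.exp (b * d0) < Real.exp (b * d1) :=
    Real.exp_lt_exp.2 (by nlinarith)
  have e2 : Real.exp (a * d0) < Real.exp (a * d1) :=
    Real.exp_lt_exp.2 (by nlinarith)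
  nlinarith [pow_pos ha 2, pow_pos hb 2,
    mul_lt_mul_of_pos_left e1 (pow_pos ha 2), mul_lt_mul_of_pos_left e2 (pow_pos hb 2)]

theorem stmt_4 (lam1 lam2 : ℝ) (h1 : 0 < lam1) (h2 : 0 < lam2) :
    {β : ℝ | 0 < β ∧ β = (1 - Real.exp (-lam1 * β)) * (1 - Real.exp (-lam2 * β))}.encard ≤ 2 := by
  set S := {β : ℝ | 0 < β ∧ β = (1 - Real.exp (-lam1 * β)) * (1 - Real.exp (-lam2 * β))} with hS
  by_contra hc
  push_neg at hc
  obtain ⟨x, y, hxS, hyS, hxy⟩ := Set.one_lt_encard_iff.1 ((by norm_num : (1:ℕ∞) < 2).trans hc)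
  have hdiff : 0 < (S \ {x, y}).encard := by
    have hle := Set.tsub_encard_le_encard_diff S {x, y}
    rw [Set.encard_pair hxy] at hle
    have h0 : (0 : ℕ∞) < S.encard - 2 := tsub_pos_iff_lt.2 hc
    exact h0.trans_le hle
  obtain ⟨z, hzd⟩ := Set.encard_pos.1 hdiff
  have hzS : z ∈ S := hzd.1
  have hzx : z ≠ x := fun h => hzd.2 (by simp [h])
  have hzy : z ≠ y := fun h => hzd.2 (by simp [h])
  obtain ⟨hx0, hxE⟩ := hxS
  obtain ⟨hy0, hyE⟩ := hyS
  obtain ⟨hz0, hzE⟩ := hzS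
  rcases lt_trichotomy x y with h₁ | h₁ | h₁
  · rcases lt_trichotomy y z with h₂ | h₂ | h₂
    · exact key_aux lam1 lam2 h1 h2 hx0 h₁ h₂ hxE hyE hzE
    · exact hzy h₂.symm
    · rcases lt_trichotomy x z with h₃ | h₃ | h₃
      · exact key_aux lam1 lam2 h1 h2 hx0 h₃ h₂ hxE hzE hyE
      · exact hzx h₃.symm
      · exact key_aux lam1 lam2 h1 h2 hz0 h₃ h₁ hzE hxE hyE
  · exact hxy h₁
  · rcases lt_trichotomy x z with h₂ | h₂ | h₂
    · exact key_aux lam1 lam2 h1 h2 hy0 h₁ h₂ hyE hxE hzE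
    · exact hzx h₂.symm
    · rcases lt_trichotomy y z with h₃ | h₃ | h₃
      · exact key_aux lam1 lam2 h1 h2 hy0 h₃ h₂ hyE hzE hxE
      · exact hzy h₃.symm
      · exact key_aux lam1 lam2 h1 h2 hz0 h₃ h₁ hzE hyE hxE
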